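/- For the Cauchy characteristic function φ(ω) = e^{−γω} (γ > 0) and θ > 0, the function ω ↦ φ(ω)²(1 − cos(ωθ)) = e^{−2γω}(1 − cos(ωθ)) on (0, π/θ) is uniquely maximized at ω* = (2/θ) arctan(θ/(2γ)). -/

import Mathlib

open Real Set

theorem stmt12 (γ θ : ℝ) (hγ : 0 < γ) (hθ : 0 < θ)
    (f : ℝ → ℝ) (hf : ∀ ω, f ω = Real.exp (-(2 * γ * ω)) * (1 - Real.cos (ω * θ)))
    (ωs : ℝ) (hωs : ωs = (2 / θ) * Real.arctan (θ / (2 * γ))) :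
    ωs ∈ Ioo 0 (π / θ) ∧ ∀ ω ∈ Ioo 0 (π / θ), ω ≠ ωs → f ω < f ωs := by
  have hfe : f = fun ω => Real.exp (-(2 * γ * ω)) * (1 - Real.cos (ω * θ)) := funext hf
  set a := Real.arctan (θ / (2 * γ)) with ha
  have hapos : 0 < a := by
    rw [ha, ← Real.arctan_zero]
    exact Real.arctan_strictMono (by positivity)
  have halt : a < π / 2 := Real.arctan_lt_pi_div_two _
  have hta : Real.tan a = θ / (2 * γ) := Real.tan_arctan _
  have hωspos : 0 < ωs := by rw [hωs]; positivity
  have hωsθ : ωs * θ = 2 * a := by rw [hωs]; field_simp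
  have hωslt : ωs < π / θ := by
    rw [lt_div_iff₀ hθ]; nlinarith
  -- derivative
  have hderiv : ∀ ω : ℝ, HasDerivAt f
      (Real.exp (-(2 * γ * ω)) * (θ * Real.sin (ω * θ) - 2 * γ * (1 - Real.cos (ω * θ)))) ω := by
    intro ω
    have h0 : HasDerivAt (fun ω : ℝ => -(2 * γ * ω)) (-(2 * γ)) ω := by
      simpa using (((hasDerivAt_id ω).const_mul (2 * γ)).fun_neg)
    have h1 : HasDerivAt (fun ω : ℝ => Real.exp (-(2 * γ * ω)))
        (Real.exp (-(2 * γ * ω)) * (-(2 * γ))) ω := (Real.hasDerivAt_exp _).comp ω h0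
    have hid : HasDerivAt (fun ω : ℝ => ω * θ) θ ω := by
      simpa using (hasDerivAt_id ω).mul_const θ
    have hc : HasDerivAt (fun ω : ℝ => Real.cos (ω * θ)) (-Real.sin (ω * θ) * θ) ω :=
      by have := (Real.hasDerivAt_cos (ω * θ)).comp ω hid; exact this
    have h2 : HasDerivAt (fun ω : ℝ => 1 - Real.cos (ω * θ)) (θ * Real.sin (ω * θ)) ω := by
      simpa [mul_comm] using ((hasDerivAt_const ω (1 : ℝ)).fun_sub hc)
    have := h1.fun_mul h2
    rw [hfe]
    refine this.congr_deriv ?_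
    ring
  have hcont : Continuous f := by
    rw [hfe]; continuity
  -- factorization with half angle s
  have hfact : ∀ s : ℝ, θ * Real.sin (2 * s) - 2 * γ * (1 - Real.cos (2 * s))
      = 2 * Real.sin s * (θ * Real.cos s - 2 * γ * Real.sin s) := by
    intro s
    rw [Real.sin_two_mul, Real.cos_two_mul]
    nlinarith [Real.sin_sq_add_cos_sq s]
  -- sign of the bracket
  have hbrak : ∀ ω : ℝ, 0 < ω → ω < π / θ →
      θ * Real.sin (ω * θ) - 2 * γ * (1 - Real.cos (ω * θ))
      = 2 * Real.sin (ω * θ / 2) * (θ * Real.cos (ω * θ / 2) - 2 * γ * Real.sin (ω * θ / 2)) := by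
    intro ω _ _
    have h := hfact (ω * θ / 2)
    rw [show 2 * (ω * θ / 2) = ω * θ by ring] at h
    exact h
  have hs_pos : ∀ ω : ℝ, 0 < ω → ω < π / θ → 0 < ω * θ / 2 ∧ ω * θ / 2 < π / 2 := by
    intro ω h1 h2
    constructor
    · positivity
    · rw [lt_div_iff₀ hθ] at h2; linarith
  have hsin_pos : ∀ s : ℝ, 0 < s → s < π / 2 → 0 < Real.sin s := fun s h1 h2 =>
    Real.sin_pos_of_pos_of_lt_pi h1 (by linarith [Real.pi_pos])
  have hcos_pos : ∀ s : ℝ, 0 < s → s < π / 2 → 0 < Real.cos s := fun s h1 h2 =>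
    Real.cos_pos_of_mem_Ioo ⟨by linarith [Real.pi_pos], h2⟩
  -- deriv positive on Ioo 0 ωs
  have hdpos : ∀ ω ∈ Ioo (0:ℝ) ωs, 0 < deriv f ω := by
    intro ω ⟨h1, h2⟩
    have hlt : ω < π / θ := lt_trans h2 hωslt
    obtain ⟨hs1, hs2⟩ := hs_pos ω h1 hlt
    set s := ω * θ / 2 with hsdef
    have hsa : s < a := by rw [hsdef]; nlinarith
    have hsin := hsin_pos s hs1 hs2
    have hcos := hcos_pos s hs1 hs2
    have htan : Real.tan s < θ / (2 * γ) := by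
      rw [← hta]
      exact Real.tan_lt_tan_of_lt_of_lt_pi_div_two (by linarith [Real.pi_pos]) halt hsa
    rw [Real.tan_eq_sin_div_cos, div_lt_div_iff₀ hcos (by positivity)] at htan
    have hb : 0 < θ * Real.cos s - 2 * γ * Real.sin s := by nlinarith
    rw [(hderiv ω).deriv, hbrak ω h1 hlt, ← hsdef]
    have he : 0 < Real.exp (-(2 * γ * ω)) := Real.exp_pos _
    positivity
  -- deriv negative on Ioo ωs (π/θ)
  have hdneg : ∀ ω ∈ Ioo ωs (π / θ), deriv f ω < 0 := by
    intro ω ⟨h1, h2⟩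
    have h0 : 0 < ω := lt_trans hωspos h1
    obtain ⟨hs1, hs2⟩ := hs_pos ω h0 h2
    set s := ω * θ / 2 with hsdef
    have hsa : a < s := by rw [hsdef]; nlinarith
    have hsin := hsin_pos s hs1 hs2
    have hcos := hcos_pos s hs1 hs2
    have htan : θ / (2 * γ) < Real.tan s := by
      rw [← hta]
      exact Real.tan_lt_tan_of_lt_of_lt_pi_div_two (by linarith [Real.pi_pos]) hs2 hsa
    rw [Real.tan_eq_sin_div_cos, div_lt_div_iff₀ (by positivity) hcos] at htan
    have hb : θ * Real.cos s - 2 * γ * Real.sin s < 0 := by nlinarith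
    rw [(hderiv ω).deriv, hbrak ω h0 h2, ← hsdef]
    have he : 0 < Real.exp (-(2 * γ * ω)) := Real.exp_pos _
    exact mul_neg_of_pos_of_neg he (mul_neg_of_pos_of_neg (by positivity) hb)
  have hmono : StrictMonoOn f (Icc 0 ωs) := by
    apply strictMonoOn_of_deriv_pos (convex_Icc 0 ωs) (hcont.continuousOn)
    rwa [interior_Icc]
  have hanti : StrictAntiOn f (Icc ωs (π / θ)) := by
    apply strictAntiOn_of_deriv_neg (convex_Icc ωs (π / θ)) (hcont.continuousOn)
    rwa [interior_Icc]
  refine ⟨⟨hωspos, hωslt⟩, ?_⟩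
  rintro ω ⟨h1, h2⟩ hne
  rcases lt_or_gt_of_ne hne with h | h
  · exact hmono ⟨le_of_lt h1, le_of_lt h⟩ ⟨le_of_lt hωspos, le_refl _⟩ h
  · exact hanti ⟨le_refl _, le_of_lt hωslt⟩ ⟨le_of_lt h, le_of_lt h2⟩ h
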